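/- For j = 1,…,m let M_j ⊆ ℝ^{n_j} be given by a C^p patch (V_j, φ_j) through x̄_j, and let A_j : ℝ^{n_j} → Set ℝ^{n_j} be partly smooth at x̄_j relative to M_j. Then the product operator A(x₁,…,x_m) = A₁(x₁) × ⋯ × A_m(x_m) on ℝ^{n₁} × ⋯ × ℝ^{n_m} is partly smooth at (x̄₁,…,x̄_m) relative to M₁ × ⋯ × M_m, the latter given by the product patch (V₁ × ⋯ × V_m, (t₁,…,t_m) ↦ (φ₁(t₁),…,φ_m(t_m))). -/

import Mathlib

open Filter Topology Set RealInnerProductSpace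

noncomputable section

/-- A set-valued operator `A` is upper semicontinuous: whenever `x k → x₀`,
`u k ∈ A (x k)` for all `k`, and `u k → u₀`, then `u₀ ∈ A x₀`. -/
def UpperSC {E : Type*} [NormedAddCommGroup E] [InnerProductSpace ℝ E]
    (A : E → Set E) : Prop :=
  ∀ (x u : ℕ → E) (x₀ u₀ : E),
    Tendsto x atTop (𝓝 x₀) → (∀ k, u k ∈ A (x k)) → Tendsto u atTop (𝓝 u₀) →
      u₀ ∈ A x₀

/-- `A` is lower semicontinuous along `S` at `x₀ ∈ S`. -/
def LowerSCAlongAt {E : Type*} [NormedAddCommGroup E] [InnerProductSpace ℝ E]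
    (A : E → Set E) (S : Set E) (x₀ : E) : Prop :=
  ∀ u₀ ∈ A x₀, ∀ x : ℕ → E, (∀ k, x k ∈ S) → Tendsto x atTop (𝓝 x₀) →
    ∃ u : ℕ → E, (∀ k, u k ∈ A (x k)) ∧ Tendsto u atTop (𝓝 u₀)

/-- `A` is continuous along `S` near `xbar`: lower semicontinuous along `S` at every
point of `S` in some neighborhood of `xbar`. -/
def ContinuousAlongNear {E : Type*} [NormedAddCommGroup E] [InnerProductSpace ℝ E]
    (A : E → Set E) (S : Set E) (xbar : E) : Prop :=
  ∃ W ∈ 𝓝 xbar, ∀ x ∈ S ∩ W, LowerSCAlongAt A S x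

/-- A `C^p` patch (local parametrization) of a manifold `M ⊆ E` through `xbar`,
with parameter domain `F` (playing the role of `ℝ^d`). -/
structure CpPatch (p : ℕ∞) (F : Type*) [NormedAddCommGroup F] [InnerProductSpace ℝ F]
    {E : Type*} [NormedAddCommGroup E] [InnerProductSpace ℝ E]
    (M : Set E) (xbar : E) where
  V : Set F
  toFun : F → E
  isOpen_V : IsOpen V
  zero_mem : (0 : F) ∈ V
  contDiffOn : ContDiffOn ℝ p toFun V
  injOn : Set.InjOn toFun V
  fderiv_injective : ∀ t ∈ V, Function.Injective (fderiv ℝ toFun t)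
  map_zero : toFun 0 = xbar
  image_eq : M = toFun '' V

namespace CpPatch

variable {p : ℕ∞} {F : Type*} [NormedAddCommGroup F] [InnerProductSpace ℝ F]
  {E : Type*} [NormedAddCommGroup E] [InnerProductSpace ℝ E] {M : Set E} {xbar : E}

/-- The tangent space `T_M(x) = range (Dφ(t))` where `x = φ(t)`, `t ∈ V`. -/
def tangent (P : CpPatch p F M xbar) (x : E) : Submodule ℝ E :=
  haveI : Nonempty F := ⟨0⟩
  LinearMap.range ((fderiv ℝ P.toFun (Function.invFunOn P.toFun P.V x) : F →L[ℝ] E) : F →ₗ[ℝ] E)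

/-- The normal space `N_M(x) = (T_M(x))ᗮ`. -/
def normal (P : CpPatch p F M xbar) (x : E) : Submodule ℝ E :=
  (P.tangent x)ᗮ

end CpPatch

/-- `Lin S`: the direction of the affine span of `S`. -/
def Lin {E : Type*} [NormedAddCommGroup E] [InnerProductSpace ℝ E] (S : Set E) :
    Submodule ℝ E :=
  (affineSpan ℝ S).direction

/-- `A` is partly smooth at `xbar` relative to `M` (given by the `C^p` patch `P`). -/
def PartlySmoothAt {p : ℕ∞} {F : Type*} [NormedAddCommGroup F] [InnerProductSpace ℝ F]
    {E : Type*} [NormedAddCommGroup E] [InnerProductSpace ℝ E] [FiniteDimensional ℝ E]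
    (A : E → Set E) (M : Set E) (xbar : E) (P : CpPatch p F M xbar) : Prop :=
  UpperSC A ∧
  -- Regularity
  (∃ W ∈ 𝓝 xbar, ∀ x ∈ W, (A x).Nonempty ∧ IsClosed (A x) ∧ Convex ℝ (A x)) ∧
  -- Sharpness
  P.normal xbar = Lin (A xbar) ∧
  (∃ η : E → E, ∃ W ∈ 𝓝 xbar, ContinuousOn η (M ∩ W) ∧
    ∀ x ∈ M ∩ W,
      (fun v => (Submodule.orthogonalProjectionOnto (P.tangent x) v : E)) '' A x = {η x}) ∧
  -- Continuity
  ContinuousAlongNear A M xbar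

/-- The `ε`-localization of `A` around `(xbar, ubar)`. -/
def Locz {E : Type*} [NormedAddCommGroup E] [InnerProductSpace ℝ E]
    (A : E → Set E) (xbar ubar : E) (ε : ℝ) (x : E) : Set E :=
  if ‖x - xbar‖ < ε then {u ∈ A x | ‖u - ubar‖ < ε} else ∅

/-- `A` is `r`-resolvent-regular at `xbar` for `ubar`, with constants `r > 0`, `ε > 0`. -/
def ResolventRegular {E : Type*} [NormedAddCommGroup E] [InnerProductSpace ℝ E]
    (A : E → Set E) (xbar ubar : E) (r ε : ℝ) : Prop :=
  0 < r ∧ 0 < ε ∧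
  (∀ x y u v : E, u ∈ Locz A xbar ubar ε x → v ∈ Locz A xbar ubar ε y →
    (inner ℝ (x - y) (u - v) : ℝ) ≥ -r * ‖x - y‖ ^ 2) ∧
  (∀ γ : ℝ, 0 < γ → γ < 1 / r →
    ∃ W ∈ 𝓝 (xbar + γ • ubar), ∃ J : E → E, ContinuousOn J W ∧
      ∀ z ∈ W, ∀ x : E,
        (∃ u ∈ Locz A xbar ubar ε x, z = x + γ • u) ↔ x = J z)

/-- The local union `U_{γ,ε} = ⋃_{x ∈ M, ‖x-x̄‖<ε} (x + γ A_ε(x))`. -/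
def LocalUnion {E : Type*} [NormedAddCommGroup E] [InnerProductSpace ℝ E]
    (A : E → Set E) (M : Set E) (xbar ubar : E) (γ ε : ℝ) : Set E :=
  {z | ∃ x ∈ M, ‖x - xbar‖ < ε ∧ ∃ u ∈ Locz A xbar ubar ε x, z = x + γ • u}


section PiHelpers

open Function

variable {ι : Type*} [Fintype ι] [DecidableEq ι] {E : ι → Type*}
  [∀ i, NormedAddCommGroup (E i)] [∀ i, InnerProductSpace ℝ (E i)]

lemma piLp_preim (W : ∀ i, Set (E i)) :
    (PiLp.continuousLinearEquiv 2 ℝ E).toHomeomorph ⁻¹' (Set.univ.pi W)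
      = {y : PiLp 2 E | ∀ i, y i ∈ W i} := by
  ext y; simp [Set.mem_pi]

lemma piLp_set_mem_nhds (W : ∀ i, Set (E i)) (x : PiLp 2 E) (h : ∀ i, W i ∈ 𝓝 (x i)) :
    {y : PiLp 2 E | ∀ i, y i ∈ W i} ∈ 𝓝 x := by
  set e := (PiLp.continuousLinearEquiv 2 ℝ E).toHomeomorph with he
  have hS : Set.univ.pi W ∈ 𝓝 (e x) := set_pi_mem_nhds Set.finite_univ (fun i _ => h i)
  have := e.continuous.continuousAt (x := x) hS
  rw [mem_map] at this
  rwa [piLp_preim] at this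

lemma piLp_isClosed (S : ∀ i, Set (E i)) (h : ∀ i, IsClosed (S i)) :
    IsClosed {y : PiLp 2 E | ∀ i, y i ∈ S i} := by
  set e := (PiLp.continuousLinearEquiv 2 ℝ E).toHomeomorph with he
  have : IsClosed (Set.univ.pi S) := isClosed_set_pi (fun i _ => h i)
  have := this.preimage e.continuous
  rwa [piLp_preim] at this

lemma piLp_convex (S : ∀ i, Set (E i)) (h : ∀ i, Convex ℝ (S i)) :
    Convex ℝ {y : PiLp 2 E | ∀ i, y i ∈ S i} := by
  have := convex_pi (fun i (_ : i ∈ Set.univ) => h i)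
  have h2 := this.linear_preimage (WithLp.linearEquiv 2 ℝ (∀ i, E i)).toLinearMap
  have h3 : {y : PiLp 2 E | ∀ i, y i ∈ S i}
      = (WithLp.linearEquiv 2 ℝ (∀ i, E i)).toLinearMap ⁻¹' Set.univ.pi S := by
    ext y; simp [Set.mem_pi]
  rw [h3]; exact h2

lemma piLp_continuousOn {X : Type*} [TopologicalSpace X] (f : ∀ i, X → E i) (s : Set X)
    (h : ∀ i, ContinuousOn (f i) s) :
    ContinuousOn (fun x => WithLp.toLp 2 (fun i => f i x)) s := by
  have h1 : ContinuousOn (fun x => (fun i => f i x : ∀ i, E i)) s := continuousOn_pi.2 h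
  exact (PiLp.continuousLinearEquiv 2 ℝ E).symm.toHomeomorph.continuous.comp_continuousOn h1

/-- The product submodule inside `PiLp 2 E`. -/
def piSub (S : ∀ i, Submodule ℝ (E i)) : Submodule ℝ (PiLp 2 E) where
  carrier := {u | ∀ i, u i ∈ S i}
  add_mem' := fun hu hv i => (S i).add_mem (hu i) (hv i)
  zero_mem' := fun i => (S i).zero_mem
  smul_mem' := fun c u hu i => (S i).smul_mem c (hu i)

lemma mem_piSub {S : ∀ i, Submodule ℝ (E i)} {u : PiLp 2 E} :
    u ∈ piSub S ↔ ∀ i, u i ∈ S i := Iff.rfl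

/-- coordinate embedding as a PiLp element -/
def piSingle (i : ι) (v : E i) : PiLp 2 E := WithLp.toLp 2 (Pi.single i v)

lemma inner_piSingle (i : ι) (v : E i) (u : PiLp 2 E) :
    ⟪piSingle i v, u⟫ = ⟪v, u i⟫ := by
  rw [PiLp.inner_apply]
  rw [Finset.sum_eq_single i]
  · simp [piSingle]
  · intro j _ hj; simp [piSingle, Pi.single_apply, hj]
  · simp

lemma piSub_orth (S : ∀ i, Submodule ℝ (E i)) :
    (piSub S)ᗮ = piSub (fun i => (S i)ᗮ) := by
  ext u
  simp only [Submodule.mem_orthogonal, mem_piSub]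
  constructor
  · intro h i w hw
    have := h (piSingle i w) (by
      intro j
      by_cases hj : j = i
      · subst hj; simpa [piSingle] using hw
      · simp [piSingle, Pi.single_apply, hj, Submodule.zero_mem])
    rwa [inner_piSingle] at this
  · intro h v hv
    rw [PiLp.inner_apply]
    exact Finset.sum_eq_zero fun i _ => h i (v i) (hv i)

lemma piSub_orthProj [∀ i, FiniteDimensional ℝ (E i)] (S : ∀ i, Submodule ℝ (E i))
    (v : PiLp 2 E) :
    (Submodule.orthogonalProjectionOnto (piSub S) v : PiLp 2 E)
      = WithLp.toLp 2 (fun i => (Submodule.orthogonalProjectionOnto (S i) (v i) : E i)) := by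
  have hw : WithLp.toLp 2 (fun i => (Submodule.orthogonalProjectionOnto (S i) (v i) : E i)) ∈ piSub S :=
    fun i => (Submodule.orthogonalProjectionOnto (S i) (v i)).2
  rw [Submodule.coe_orthogonalProjectionOnto_apply]
  apply Submodule.eq_starProjection_of_mem_orthogonal hw
  rw [piSub_orth]
  intro i
  have := Submodule.sub_starProjection_mem_orthogonal (K := S i) (v i)
  rwa [← Submodule.coe_orthogonalProjectionOnto_apply] at this

def coordEmbed (i : ι) : E i →ₗ[ℝ] PiLp 2 E where
  toFun := piSingle i
  map_add' := fun a b => by simp only [piSingle, Pi.single_add, WithLp.toLp_add]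
  map_smul' := fun c a => by simp only [piSingle, Pi.single_smul, WithLp.toLp_smul, RingHom.id_apply]

lemma piLp_sum_single (u : PiLp 2 E) : ∑ i, piSingle i (u i) = u := by
  apply (WithLp.linearEquiv 2 ℝ (∀ i, E i)).injective
  rw [map_sum]
  have h1 : ∀ i, (WithLp.linearEquiv 2 ℝ (∀ i, E i)) (piSingle i (u i)) = Pi.single i (u i) :=
    fun i => rfl
  simp_rw [h1]
  exact Finset.univ_sum_single _

lemma lin_pi (S : ∀ i, Set (E i)) (hS : ∀ i, (S i).Nonempty) :
    Lin {u : PiLp 2 E | ∀ i, u i ∈ S i} = piSub (fun i => Lin (S i)) := by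
  apply le_antisymm
  · rw [show Lin {u : PiLp 2 E | ∀ i, u i ∈ S i} = _ from rfl, Lin, direction_affineSpan,
      vectorSpan_def]
    apply Submodule.span_le.2
    rintro z hz
    obtain ⟨a, ha, b, hb, rfl⟩ := Set.mem_vsub.1 hz
    intro i
    show (a -ᵥ b) i ∈ Lin (S i)
    rw [show Lin (S i) = vectorSpan ℝ (S i) from direction_affineSpan ℝ (S i)]
    exact vsub_mem_vectorSpan ℝ (ha i) (hb i)
  · intro u hu
    show u ∈ Lin _
    rw [show Lin {u : PiLp 2 E | ∀ i, u i ∈ S i} = vectorSpan ℝ _ from direction_affineSpan ℝ _]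
    rw [← piLp_sum_single u]
    apply Submodule.sum_mem
    intro i _
    have hui : u i ∈ Submodule.span ℝ (S i -ᵥ S i) := by
      have h2 : u i ∈ Lin (S i) := hu i
      rwa [show Lin (S i) = vectorSpan ℝ (S i) from direction_affineSpan ℝ (S i),
        vectorSpan_def] at h2
    have : piSingle i (u i)
        ∈ Submodule.map (coordEmbed (E := E) i) (Submodule.span ℝ (S i -ᵥ S i)) :=
      ⟨u i, hui, rfl⟩
    rw [Submodule.map_span] at this
    rw [vectorSpan_def]
    refine Submodule.span_mono ?_ this
    rintro z ⟨w, hw, rfl⟩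
    obtain ⟨a, ha, b, hb, rfl⟩ := Set.mem_vsub.1 hw
    have hc : ∀ j, (hS j).some ∈ S j := fun j => (hS j).some_mem
    refine Set.mem_vsub.2 ⟨WithLp.toLp 2 (Function.update (fun j => (hS j).some) i a), ?_,
      WithLp.toLp 2 (Function.update (fun j => (hS j).some) i b), ?_, ?_⟩
    · intro j; by_cases hj : j = i
      · subst hj; simpa using ha
      · simpa [Function.update_of_ne hj] using hc j
    · intro j; by_cases hj : j = i
      · subst hj; simpa using hb
      · simpa [Function.update_of_ne hj] using hc j
    · symm
      show (piSingle i (a -ᵥ b) : PiLp 2 E) = _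
      ext j
      by_cases hj : j = i
      · subst hj; simp [piSingle]
      · simp [piSingle, Pi.single_apply, hj, Function.update_of_ne hj]

variable {F : ι → Type*} [∀ i, NormedAddCommGroup (F i)] [∀ i, InnerProductSpace ℝ (F i)]

def piCLM (f : ∀ i, F i →L[ℝ] E i) : PiLp 2 F →L[ℝ] PiLp 2 E :=
  (PiLp.continuousLinearEquiv 2 ℝ E).symm.toContinuousLinearMap.comp
    (ContinuousLinearMap.pi fun i => (f i).comp (PiLp.proj 2 F i))

lemma piCLM_apply (f : ∀ i, F i →L[ℝ] E i) (v : PiLp 2 F) (i : ι) :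
    piCLM f v i = f i (v i) := rfl

lemma piCLM_range (f : ∀ i, F i →L[ℝ] E i) (u : PiLp 2 E) :
    u ∈ LinearMap.range (piCLM f : PiLp 2 F →ₗ[ℝ] PiLp 2 E) ↔ ∀ i, u i ∈ LinearMap.range (f i : F i →ₗ[ℝ] E i) := by
  constructor
  · rintro ⟨v, rfl⟩ i; exact ⟨v i, rfl⟩
  · intro h
    choose v hv using h
    exact ⟨WithLp.toLp 2 v, by ext i; exact hv i⟩

lemma piLp_hasFDerivAt (φ : ∀ i, F i → E i) (f : ∀ i, F i →L[ℝ] E i) (t : PiLp 2 F)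
    (h : ∀ i, HasFDerivAt (φ i) (f i) (t i)) :
    HasFDerivAt (𝕜 := ℝ) (E := PiLp 2 F) (F := PiLp 2 E)
      (fun t => WithLp.toLp 2 (fun i => φ i (t i))) (piCLM f) t := by
  rw [← hasFDerivWithinAt_univ]
  refine (hasFDerivWithinAt_piLp (𝕜 := ℝ) (E := E) (H := PiLp 2 F) 2
    (f := fun t : PiLp 2 F => WithLp.toLp 2 (fun i => φ i (t i))) (f' := piCLM f)
    (t := Set.univ) (y := t)).2 fun i => ?_
  have h1 : HasFDerivAt (fun t : PiLp 2 F => φ i (t i)) ((f i).comp (PiLp.proj 2 F i)) t :=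
    (h i).comp t (PiLp.hasFDerivAt_apply 2 t i)
  have h2 : (PiLp.proj 2 E i).comp (piCLM f) = (f i).comp (PiLp.proj 2 F i) :=
    ContinuousLinearMap.ext fun v => rfl
  rw [h2]
  exact h1.hasFDerivWithinAt

end PiHelpers

/-- separability (product of partly smooth operators). -/
theorem partly_smooth_pi {m : ℕ} {p : ℕ∞} (hp : 1 ≤ p) (n d : Fin m → ℕ)
    (M : ∀ j, Set (EuclideanSpace ℝ (Fin (n j))))
    (xbar : PiLp 2 (fun j => EuclideanSpace ℝ (Fin (n j))))
    (A : ∀ j, EuclideanSpace ℝ (Fin (n j)) → Set (EuclideanSpace ℝ (Fin (n j))))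
    (V : ∀ j, Set (EuclideanSpace ℝ (Fin (d j))))
    (φ : ∀ j, EuclideanSpace ℝ (Fin (d j)) → EuclideanSpace ℝ (Fin (n j)))
    (P : ∀ j, CpPatch p (EuclideanSpace ℝ (Fin (d j))) (M j) (xbar j))
    (hPV : ∀ j, (P j).V = V j) (hPφ : ∀ j, (P j).toFun = φ j)
    (hA : ∀ j, PartlySmoothAt (A j) (M j) (xbar j) (P j))
    -- the product patch: its domain is `V₁ × ⋯ × V_m` and its map is `t ↦ (φ₁(t₁),…,φ_m(t_m))`
    (Q : CpPatch p (PiLp 2 (fun j => EuclideanSpace ℝ (Fin (d j))))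
        {x : PiLp 2 (fun j => EuclideanSpace ℝ (Fin (n j))) | ∀ j, x j ∈ M j} xbar)
    (hQV : Q.V = {t : PiLp 2 (fun j => EuclideanSpace ℝ (Fin (d j))) | ∀ j, t j ∈ V j})
    (hQφ : Q.toFun = fun t => WithLp.toLp 2 (fun j => φ j (t j))) :
    PartlySmoothAt
      (fun x => {u : PiLp 2 (fun j => EuclideanSpace ℝ (Fin (n j))) | ∀ j, u j ∈ A j (x j)})
      {x : PiLp 2 (fun j => EuclideanSpace ℝ (Fin (n j))) | ∀ j, x j ∈ M j} xbar Q := by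
  classical
  -- basic facts
  have hxbarM : ∀ j, xbar j ∈ M j := by
    intro j
    rw [(P j).image_eq]
    exact ⟨0, (P j).zero_mem, (P j).map_zero⟩
  -- tangent space of the product patch
  have tangent_eq : ∀ x ∈ {x : PiLp 2 (fun j => EuclideanSpace ℝ (Fin (n j))) | ∀ j, x j ∈ M j}, Q.tangent x = piSub (fun j => (P j).tangent (x j)) := by
    intro x hx
    have hx' : x ∈ Q.toFun '' Q.V := by rw [← Q.image_eq]; exact hx
    set t := Function.invFunOn Q.toFun Q.V x with ht
    have hex : ∃ t' ∈ Q.V, Q.toFun t' = x := by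
      obtain ⟨t', ht'V, ht'⟩ := hx'; exact ⟨t', ht'V, ht'⟩
    have htV : t ∈ Q.V := Function.invFunOn_mem hex
    have htx : Q.toFun t = x := Function.invFunOn_eq hex
    have htj : ∀ j, t j ∈ V j := by rw [hQV] at htV; exact htV
    have hφt : ∀ j, φ j (t j) = x j := by
      rw [hQφ] at htx
      exact fun j => congrArg (fun y => y j) htx
    have hstj : ∀ j, Function.invFunOn ((P j).toFun) ((P j).V) (x j) = t j := by
      intro j
      have hexj : ∃ s ∈ (P j).V, (P j).toFun s = x j := by
        have : x j ∈ (P j).toFun '' (P j).V := by rw [← (P j).image_eq]; exact hx j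
        obtain ⟨s, hsV, hs⟩ := this; exact ⟨s, hsV, hs⟩
      refine (P j).injOn (Function.invFunOn_mem hexj) (by rw [hPV]; exact htj j) ?_
      rw [Function.invFunOn_eq hexj, hPφ]
      exact (hφt j).symm
    have hdiff : ∀ j, HasFDerivAt (φ j) (fderiv ℝ (φ j) (t j)) (t j) := by
      intro j
      have hD : DifferentiableAt ℝ (φ j) (t j) := by
        have := (((P j).contDiffOn.differentiableOn (by exact_mod_cast (zero_lt_one.trans_le hp).ne')).differentiableAt
          (((P j).isOpen_V).mem_nhds (by rw [hPV]; exact htj j)))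
        rwa [hPφ] at this
      exact hD.hasFDerivAt
    have hQdiff : HasFDerivAt Q.toFun (piCLM fun j => fderiv ℝ (φ j) (t j)) t := by
      rw [hQφ]
      exact piLp_hasFDerivAt _ _ t hdiff
    have htangent_j : ∀ j, (P j).tangent (x j) = LinearMap.range (fderiv ℝ (φ j) (t j) : EuclideanSpace ℝ (Fin (d j)) →ₗ[ℝ] EuclideanSpace ℝ (Fin (n j))) := by
      intro j
      show LinearMap.range ((fderiv ℝ (P j).toFun
        (Function.invFunOn ((P j).toFun) ((P j).V) (x j)) : EuclideanSpace ℝ (Fin (d j)) →L[ℝ] EuclideanSpace ℝ (Fin (n j))) : EuclideanSpace ℝ (Fin (d j)) →ₗ[ℝ] EuclideanSpace ℝ (Fin (n j))) = _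
      rw [hstj j, hPφ]
    show LinearMap.range (fderiv ℝ Q.toFun t : PiLp 2 (fun j => EuclideanSpace ℝ (Fin (d j))) →ₗ[ℝ] PiLp 2 (fun j => EuclideanSpace ℝ (Fin (n j)))) = _
    rw [hQdiff.fderiv]
    ext u
    rw [piCLM_range, mem_piSub]
    exact forall_congr' fun j => by rw [htangent_j j]
  refine ⟨?_, ?_, ?_, ?_, ?_⟩
  -- upper semicontinuity
  · intro x u x₀ u₀ hx hu hu0 j
    exact (hA j).1 (fun k => x k j) (fun k => u k j) (x₀ j) (u₀ j)
      (((PiLp.continuous_apply (p := 2) (β := fun j => EuclideanSpace ℝ (Fin (n j))) j).tendsto x₀).comp hx) (fun k => hu k j) (((PiLp.continuous_apply (p := 2) (β := fun j => EuclideanSpace ℝ (Fin (n j))) j).tendsto u₀).comp hu0)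
  -- regularity
  · choose W hW h using fun j => (hA j).2.1
    refine ⟨{y | ∀ j, y j ∈ W j}, piLp_set_mem_nhds _ _ hW, ?_⟩
    intro x hx
    refine ⟨?_, ?_, ?_⟩
    · choose u hu using fun j => (h j _ (hx j)).1
      exact ⟨WithLp.toLp 2 u, hu⟩
    · exact piLp_isClosed _ fun j => (h j _ (hx j)).2.1
    · exact piLp_convex _ fun j => (h j _ (hx j)).2.2
  -- sharpness: normal space
  · choose W hW h using fun j => (hA j).2.1
    have hne : ∀ j, (A j (xbar j)).Nonempty := fun j => (h j _ (mem_of_mem_nhds (hW j))).1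
    have h1 : Q.normal xbar = piSub (fun j => (P j).normal (xbar j)) := by
      show (Q.tangent xbar)ᗮ = _
      rw [tangent_eq xbar hxbarM, piSub_orth]
      rfl
    rw [h1]
    have h2 : (fun j => (P j).normal (xbar j)) = fun j => Lin (A j (xbar j)) :=
      funext fun j => (hA j).2.2.1
    rw [h2, ← lin_pi _ hne]
  -- sharpness: projection map
  · choose η W hW hηc hηp using fun j => (hA j).2.2.2.1
    choose Wr hWr hreg using fun j => (hA j).2.1
    refine ⟨fun x => WithLp.toLp 2 (fun j => η j (x j)), {y | ∀ j, y j ∈ W j ∩ Wr j},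
      piLp_set_mem_nhds _ _ (fun j => inter_mem (hW j) (hWr j)), ?_, ?_⟩
    · apply piLp_continuousOn
      intro j
      refine (hηc j).comp (PiLp.proj (𝕜 := ℝ) 2 (fun j => EuclideanSpace ℝ (Fin (n j))) j).continuous.continuousOn ?_
      rintro x ⟨hxM, hxW⟩
      exact ⟨hxM j, (hxW j).1⟩
    · rintro x ⟨hxM, hxW⟩
      have hproj : ∀ v : PiLp 2 (fun j => EuclideanSpace ℝ (Fin (n j))), (Submodule.orthogonalProjectionOnto (Q.tangent x) v : PiLp 2 (fun j => EuclideanSpace ℝ (Fin (n j))))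
          = WithLp.toLp 2 (fun j => (Submodule.orthogonalProjectionOnto ((P j).tangent (x j)) (v j) :
              EuclideanSpace ℝ (Fin (n j)))) := by
        intro v
        rw [tangent_eq x hxM, piSub_orthProj]
      have himg : ∀ j, (fun v => (Submodule.orthogonalProjectionOnto ((P j).tangent (x j)) v :
          EuclideanSpace ℝ (Fin (n j)))) '' (A j (x j)) = {η j (x j)} :=
        fun j => hηp j (x j) ⟨hxM j, (hxW j).1⟩
      apply Set.eq_singleton_iff_unique_mem.2
      constructor
      · choose u hu using fun j => (hreg j _ (hxW j).2).1
        refine ⟨WithLp.toLp 2 u, hu, ?_⟩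
        show (Submodule.orthogonalProjectionOnto (Q.tangent x) (WithLp.toLp 2 u) :
          PiLp 2 (fun j => EuclideanSpace ℝ (Fin (n j)))) = _
        rw [hproj (WithLp.toLp 2 u)]
        ext j : 1
        have : (Submodule.orthogonalProjectionOnto ((P j).tangent (x j)) (u j) :
            EuclideanSpace ℝ (Fin (n j))) ∈ ({η j (x j)} : Set _) := by
          rw [← himg j]; exact ⟨u j, hu j, rfl⟩
        exact this
      · rintro z ⟨u, hu, rfl⟩
        show (Submodule.orthogonalProjectionOnto (Q.tangent x) u :
          PiLp 2 (fun j => EuclideanSpace ℝ (Fin (n j)))) = _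
        rw [hproj u]
        ext j : 1
        have : (Submodule.orthogonalProjectionOnto ((P j).tangent (x j)) (u j) :
            EuclideanSpace ℝ (Fin (n j))) ∈ ({η j (x j)} : Set _) := by
          rw [← himg j]; exact ⟨u j, hu j, rfl⟩
        exact this
  -- continuity along M
  · choose W hW hl using fun j => (hA j).2.2.2.2
    refine ⟨{y | ∀ j, y j ∈ W j}, piLp_set_mem_nhds _ _ hW, ?_⟩
    rintro x ⟨hxM, hxW⟩ u₀ hu₀ xs hxsM hxs
    have := fun j => hl j (x j) ⟨hxM j, hxW j⟩ (u₀ j) (hu₀ j) (fun k => xs k j)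
      (fun k => hxsM k j) (((PiLp.continuous_apply (p := 2) (β := fun j => EuclideanSpace ℝ (Fin (n j))) j).tendsto x).comp hxs)
    choose u hu1 hu2 using this
    exact ⟨fun k => WithLp.toLp 2 (fun j => u j k), fun k j => hu1 j k,
      ((PiLp.continuous_toLp (p := 2) (β := fun j => EuclideanSpace ℝ (Fin (n j)))).tendsto _).comp (tendsto_pi_nhds.2 (fun j => hu2 j))⟩


end
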